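/- (q-Racah three-term relation, contiguous in γ) Let R_n(μ(x); α,β,γ,δ | q) denote the q-Racah polynomial with μ(x) = q^{−x} + γδ q^{x+1}. Then (q^{−x} − qγ)(1 − γδ q^{x+1}) R_n(μ(x); α,β,qγ,δ | q) + (qγ − γδ q^{x+1})(1 − q^{−x}) R_n(μ(x−1); α,β,qγ,δ | q) = (q^{−x} − γδ q^{x+1})(1 − qγ) R_n(μ(x); α,β,γ,δ | q), for all integers x and nonnegative integers n for which the polynomials are defined. -/

import Mathlib

open Finset

/-- The q-Pochhammer symbol `(a;q)_k = ∏_{i=0}^{k-1} (1 - a qⁱ)`. -/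
def qPoch (q a : ℂ) (k : ℕ) : ℂ := ∏ i ∈ range k, (1 - a * q ^ i)

/-- The q-Racah polynomial
`R_n(μ(x); α,β,γ,δ | q) = ₄φ₃(q^{−n}, αβq^{n+1}, q^{−x}, γδq^{x+1}; αq, βδq, γq; q, q)`,
as a terminating sum (the upper parameter `q^{-n}` forces termination at `n`). -/
noncomputable def qRacah (q α β γ δ : ℂ) (n : ℕ) (x : ℤ) : ℂ :=
  ∑ k ∈ range (n + 1),
    (qPoch q (q ^ (-(n : ℤ))) k * qPoch q (α * β * q ^ ((n : ℤ) + 1)) k *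
        qPoch q (q ^ (-x)) k * qPoch q (γ * δ * q ^ (x + 1)) k) /
      (qPoch q q k * qPoch q (α * q) k * qPoch q (β * δ * q) k * qPoch q (γ * q) k) * q ^ k

lemma qPoch_shift (q a : ℂ) (k : ℕ) :
    (1 - a) * qPoch q (q * a) k = qPoch q a k * (1 - a * q ^ k) := by
  have h1 : qPoch q a (k+1) = qPoch q a k * (1 - a * q ^ k) := by
    simp [qPoch, Finset.prod_range_succ]
  have h2 : qPoch q a (k+1) = (1 - a) * qPoch q (q * a) k := by
    rw [qPoch, Finset.prod_range_succ']
    simp [qPoch, pow_succ]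
    rw [mul_comm]
    congr 1
    apply Finset.prod_congr rfl
    intro i _
    ring
  rw [← h2, h1]

/-- the three-term relation contiguous in `γ` for q-Racah polynomials:
`(q^{−x} − qγ)(1 − γδq^{x+1}) R_n(μ(x); α,β,qγ,δ)
  + (qγ − γδq^{x+1})(1 − q^{−x}) R_n(μ(x−1); α,β,qγ,δ)
  = (q^{−x} − γδq^{x+1})(1 − qγ) R_n(μ(x); α,β,γ,δ)`. -/
theorem qRacah_contiguous_gamma (q α β γ δ : ℂ) (n : ℕ) (x : ℤ) (hq0 : q ≠ 0)
    (hden : ∀ k ≤ n, qPoch q q k ≠ 0 ∧ qPoch q (α * q) k ≠ 0 ∧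
      qPoch q (β * δ * q) k ≠ 0 ∧ qPoch q (γ * q) k ≠ 0 ∧ qPoch q (γ * q ^ 2) k ≠ 0) :
    (q ^ (-x) - q * γ) * (1 - γ * δ * q ^ (x + 1)) * qRacah q α β (q * γ) δ n x +
      (q * γ - γ * δ * q ^ (x + 1)) * (1 - q ^ (-x)) * qRacah q α β (q * γ) δ n (x - 1) =
    (q ^ (-x) - γ * δ * q ^ (x + 1)) * (1 - q * γ) * qRacah q α β γ δ n x := by
  unfold qRacah
  rw [Finset.mul_sum, Finset.mul_sum, Finset.mul_sum, ← Finset.sum_add_distrib]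
  apply Finset.sum_congr rfl
  intro k hk
  rw [Finset.mem_range] at hk
  obtain ⟨hQ, hA, hB, hG, hG2⟩ := hden k (Nat.lt_succ_iff.mp hk)
  -- rewrite parameter expressions
  have e1 : (q * γ) * δ * q ^ ((x - 1) + 1) = γ * δ * q ^ (x + 1) := by
    rw [show (x - 1) + 1 = x by ring, zpow_add₀ hq0 x 1, zpow_one]
    ring
  have e2 : q ^ (-(x - 1)) = q * q ^ (-x) := by
    rw [show -(x-1) = 1 + (-x) by ring, zpow_add₀ hq0]
    simp
  have e3 : (q * γ) * δ * q ^ (x + 1) = q * (γ * δ * q ^ (x + 1)) := by ring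
  have e4 : (q * γ) * q = q * (γ * q) := by ring
  have e5 : γ * q ^ 2 = q * (γ * q) := by ring
  rw [e1, e2, e3, e4]
  rw [e5] at hG2
  set u := γ * δ * q ^ (x + 1) with hu
  set v := (q : ℂ) ^ (-x) with hv
  have h1 := qPoch_shift q u k
  have h2 := qPoch_shift q v k
  have h3 := qPoch_shift q (γ * q) k
  set A := qPoch q u k
  set A' := qPoch q (q * u) k
  set X := qPoch q v k
  set X' := qPoch q (q * v) k
  set G := qPoch q (γ * q) k
  set G2 := qPoch q (q * (γ * q)) k
  set P1 := qPoch q (q ^ (-(n:ℤ))) k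
  set P2 := qPoch q (α * β * q ^ ((n:ℤ) + 1)) k
  set Q := qPoch q q k
  set PA := qPoch q (α * q) k
  set PB := qPoch q (β * δ * q) k
  field_simp
  linear_combination ((v - q*γ) * P1 * P2 * X * G) * h1 +
    ((q*γ - u) * P1 * P2 * A * G) * h2 -
    ((v - u) * P1 * P2 * X * A) * h3
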